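/- Let K, L, A be positive definite d×d matrices with K ⪰ L, and let α > 0. Define D(α) = (1/2) ln det((K + αA)(L + αA)^{-1}). Then D is nonincreasing in α on (0, ∞), and D(α) → 0 as α → ∞. -/

import Mathlib

open Matrix

set_option linter.unusedSectionVars false

variable {n : Type*} [Fintype n] [DecidableEq n]

open scoped MatrixOrder in
noncomputable def Matrix.PosSemidef.sqrt {M : Matrix n n ℝ} (_ : M.PosSemidef) : Matrix n n ℝ :=
  CFC.sqrt M

open scoped MatrixOrder in
lemma Matrix.PosSemidef.posSemidef_sqrt {M : Matrix n n ℝ} (hM : M.PosSemidef) :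
    hM.sqrt.PosSemidef :=
  (CFC.sqrt_nonneg M).posSemidef

open scoped MatrixOrder in
lemma Matrix.PosSemidef.sqrt_mul_self {M : Matrix n n ℝ} (hM : M.PosSemidef) :
    hM.sqrt * hM.sqrt = M :=
  CFC.sqrt_mul_sqrt_self M hM.nonneg

private lemma posDef_smul {A : Matrix n n ℝ} (hA : A.PosDef) {c : ℝ} (hc : 0 < c) :
    (c • A).PosDef := by
  refine PosDef.of_dotProduct_mulVec_pos ?_ fun x hx => ?_
  · show (c • A)ᴴ = c • A
    rw [conjTranspose_smul, hA.1.eq, star_trivial]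
  · rw [smul_mulVec, dotProduct_smul, smul_eq_mul]
    exact mul_pos hc (hA.dotProduct_mulVec_pos hx)

private lemma posSemidef_smul {A : Matrix n n ℝ} (hA : A.PosSemidef) {c : ℝ} (hc : 0 ≤ c) :
    (c • A).PosSemidef := by
  refine PosSemidef.of_dotProduct_mulVec_nonneg ?_ fun x => ?_
  · show (c • A)ᴴ = c • A
    rw [conjTranspose_smul, hA.1.eq, star_trivial]
  · rw [smul_mulVec, dotProduct_smul, smul_eq_mul]
    exact mul_nonneg hc (hA.dotProduct_mulVec_nonneg x)

private lemma one_le_det_one_add {P : Matrix n n ℝ} (hP : P.PosSemidef) :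
    1 ≤ (1 + P).det := by
  have h := hP.1.spectral_theorem
  rw [Unitary.conjStarAlgAut_apply] at h
  set U : Matrix n n ℝ := (IsHermitian.eigenvectorUnitary hP.1 : Matrix n n ℝ) with hUdef
  have hU : U * star U = 1 :=
    (Matrix.mem_unitaryGroup_iff).mp (IsHermitian.eigenvectorUnitary hP.1).2
  set f : n → ℝ := RCLike.ofReal ∘ hP.1.eigenvalues with hfdef
  have h1 : 1 + P = U * (1 + diagonal f) * star U := by
    rw [Matrix.mul_add, Matrix.add_mul, Matrix.mul_one, hU, ← h]
  have h2 : (1 + P).det = (1 + diagonal f).det := by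
    rw [h1, det_mul, det_mul]
    have : U.det * (star U).det = 1 := by rw [← det_mul, hU, det_one]
    calc U.det * (1 + diagonal f).det * (star U).det
        = (1 + diagonal f).det * (U.det * (star U).det) := by ring
      _ = (1 + diagonal f).det := by rw [this, mul_one]
  rw [h2, ← diagonal_one, diagonal_add, det_diagonal]
  have key : ∏ i : n, (1:ℝ) ≤ ∏ i : n, (1 + f) i :=
    Finset.prod_le_prod (fun i _ => zero_le_one) (fun i _ => by
      have := hP.eigenvalues_nonneg i
      simp only [hfdef, Pi.add_apply, Function.comp_apply, Pi.one_apply]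
      norm_num
      exact this)
  simpa using key

private lemma det_add_posSemidef {W M : Matrix n n ℝ} (hW : W.PosDef) (hM : M.PosSemidef) :
    (W + M).det = W.det * (1 + hM.sqrt * W⁻¹ * hM.sqrt).det := by
  have hd : IsUnit W.det := isUnit_iff_ne_zero.mpr hW.det_pos.ne'
  have h1 : W + M = W * (1 + W⁻¹ * M) := by
    rw [Matrix.mul_add, Matrix.mul_one, Matrix.mul_nonsing_inv_cancel_left _ _ hd]
  rw [h1, det_mul]
  congr 1
  conv_lhs => rw [← hM.sqrt_mul_self, ← Matrix.mul_assoc, det_one_add_mul_comm,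
    ← Matrix.mul_assoc]

private lemma det_le_det' {X Y : Matrix n n ℝ} (hX : X.PosDef) (h : (Y - X).PosSemidef) :
    X.det ≤ Y.det := by
  have e : X + (Y - X) = Y := by abel
  have h0 := det_add_posSemidef hX h
  rw [e] at h0
  rw [h0]
  have h2 : (h.sqrt * X⁻¹ * h.sqrt).PosSemidef := by
    have := hX.inv.posSemidef.mul_mul_conjTranspose_same h.sqrt
    rwa [h.posSemidef_sqrt.1.eq] at this
  exact le_mul_of_one_le_right hX.det_pos.le (one_le_det_one_add h2)

private lemma sqrt_det_isUnit {Y : Matrix n n ℝ} (hY : Y.PosDef) :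
    IsUnit hY.posSemidef.sqrt.det := by
  have h2 : hY.posSemidef.sqrt.det * hY.posSemidef.sqrt.det = Y.det := by
    rw [← det_mul, hY.posSemidef.sqrt_mul_self]
  have h3 := hY.det_pos
  refine isUnit_iff_ne_zero.mpr fun h => ?_
  rw [h, mul_zero] at h2
  linarith

private lemma posDef_conj {A B : Matrix n n ℝ} (hA : A.PosDef) (hB : IsUnit B.det) :
    (Bᴴ * A * B).PosDef := by
  refine PosDef.of_dotProduct_mulVec_pos (isHermitian_conjTranspose_mul_mul B hA.1) fun x hx => ?_
  have hBx : B *ᵥ x ≠ 0 := by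
    intro hz
    apply hx
    have := congrArg (fun v => B⁻¹ *ᵥ v) hz
    simpa [Matrix.mulVec_mulVec, Matrix.nonsing_inv_mul B hB] using this
  simpa only [star_mulVec, dotProduct_mulVec, vecMul_vecMul] using hA.dotProduct_mulVec_pos hBx

private lemma sqrt_inv_conj {X : Matrix n n ℝ} (hX : X.PosDef) :
    hX.inv.posSemidef.sqrt * X * hX.inv.posSemidef.sqrt = 1 := by
  set R := hX.inv.posSemidef.sqrt with hR
  have hRR : R * R = X⁻¹ := hX.inv.posSemidef.sqrt_mul_self
  have hRd : IsUnit R.det := sqrt_det_isUnit hX.inv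
  have hXd : IsUnit X.det := isUnit_iff_ne_zero.mpr hX.det_pos.ne'
  have hX' : X = R⁻¹ * R⁻¹ := by
    rw [← Matrix.mul_inv_rev, hRR, Matrix.nonsing_inv_nonsing_inv _ hXd]
  rw [hX', ← Matrix.mul_assoc, Matrix.mul_nonsing_inv _ hRd, Matrix.one_mul,
    Matrix.nonsing_inv_mul _ hRd]

private lemma conj_inv_eq {R T : Matrix n n ℝ} (hRd : IsUnit R.det) :
    R * (R * T * R)⁻¹ * R = T⁻¹ := by
  rw [Matrix.mul_inv_rev, Matrix.mul_inv_rev,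
    Matrix.mul_nonsing_inv_cancel_left _ _ hRd,
    Matrix.nonsing_inv_mul_cancel_right _ _ hRd]

private lemma inv_sub_inv_posSemidef {S T : Matrix n n ℝ} (hS : S.PosDef) (hT : T.PosDef)
    (h : (S - T).PosSemidef) : (T⁻¹ - S⁻¹).PosSemidef := by
  set R := hS.inv.posSemidef.sqrt with hRdefn
  have hRps : R.PosSemidef := hS.inv.posSemidef.posSemidef_sqrt
  have hRR : R * R = S⁻¹ := hS.inv.posSemidef.sqrt_mul_self
  have hRd : IsUnit R.det := sqrt_det_isUnit hS.inv
  have hRSR : R * S * R = 1 := sqrt_inv_conj hS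
  have hX : (R * T * R).PosDef := by
    have := posDef_conj hT hRd (B := R)
    rwa [hRps.1.eq] at this
  have h1 : (1 - R * T * R).PosSemidef := by
    have := h.mul_mul_conjTranspose_same R
    rwa [hRps.1.eq, Matrix.mul_sub, Matrix.sub_mul, hRSR] at this
  set X := R * T * R with hXdefn
  set R' := hX.inv.posSemidef.sqrt with hR'defn
  have hR'ps : R'.PosSemidef := hX.inv.posSemidef.posSemidef_sqrt
  have hR'R' : R' * R' = X⁻¹ := hX.inv.posSemidef.sqrt_mul_self
  have hR'XR' : R' * X * R' = 1 := sqrt_inv_conj hX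
  have h2 : (X⁻¹ - 1).PosSemidef := by
    have := h1.mul_mul_conjTranspose_same R'
    rwa [hR'ps.1.eq, Matrix.mul_sub, Matrix.sub_mul, Matrix.mul_one, hR'R', hR'XR'] at this
  have h3 := h2.mul_mul_conjTranspose_same R
  rwa [hRps.1.eq, Matrix.mul_sub, Matrix.sub_mul, Matrix.mul_one, hXdefn,
    conj_inv_eq hRd, hRR] at h3

private lemma det_ratio_le {S T M : Matrix n n ℝ} (hS : S.PosDef) (hT : T.PosDef)
    (hST : (S - T).PosSemidef) (hM : M.PosSemidef) :
    (S + M).det * T.det ≤ (T + M).det * S.det := by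
  rw [det_add_posSemidef hS hM, det_add_posSemidef hT hM]
  set m := hM.sqrt with hmdefn
  have hQS : (1 + m * S⁻¹ * m).PosDef := by
    refine Matrix.PosDef.one.add_posSemidef ?_
    have := hS.inv.posSemidef.mul_mul_conjTranspose_same m
    rwa [hM.posSemidef_sqrt.1.eq] at this
  have hdiff : ((1 + m * T⁻¹ * m) - (1 + m * S⁻¹ * m)).PosSemidef := by
    have h4 := (inv_sub_inv_posSemidef hS hT hST).mul_mul_conjTranspose_same m
    rw [hM.posSemidef_sqrt.1.eq, Matrix.mul_sub, Matrix.sub_mul] at h4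
    convert h4 using 1
    abel
  have hle : (1 + m * S⁻¹ * m).det ≤ (1 + m * T⁻¹ * m).det := det_le_det' hQS hdiff
  have h5 := hS.det_pos
  have h6 := hT.det_pos
  have h7 := hQS.det_pos
  nlinarith [mul_le_mul_of_nonneg_left hle (le_of_lt (mul_pos h5 h6))]

theorem stmt_13 {d : ℕ} (K L A : Matrix (Fin d) (Fin d) ℝ)
    (hK : K.PosDef) (hL : L.PosDef) (hA : A.PosDef)
    (hKL : (K - L).PosSemidef) :
    AntitoneOn (fun α : ℝ => (1 / 2) * Real.log ((K + α • A) * (L + α • A)⁻¹).det)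
        (Set.Ioi (0 : ℝ)) ∧
      Filter.Tendsto (fun α : ℝ => (1 / 2) * Real.log ((K + α • A) * (L + α • A)⁻¹).det)
        Filter.atTop (nhds 0) := by
  have hKa : ∀ α : ℝ, 0 < α → (K + α • A).PosDef := fun α hα => hK.add (posDef_smul hA hα)
  have hLa : ∀ α : ℝ, 0 < α → (L + α • A).PosDef := fun α hα => hL.add (posDef_smul hA hα)
  have hfval : ∀ α : ℝ, 0 < α →
      (1 / 2 : ℝ) * Real.log ((K + α • A) * (L + α • A)⁻¹).det
        = (1 / 2) * Real.log ((K + α • A).det * ((L + α • A).det)⁻¹) := by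
    intro α hα
    rw [det_mul, det_nonsing_inv, Ring.inverse_eq_inv']
  constructor
  · intro a ha b hb hab
    simp only [Set.mem_Ioi] at ha hb
    have hKa' := hKa a ha; have hLa' := hLa a ha
    have hKb' := hKa b hb; have hLb' := hLa b hb
    simp only
    rw [hfval a ha, hfval b hb]
    have key : (K + b • A).det * (L + a • A).det ≤ (K + a • A).det * (L + b • A).det := by
      have e3 : (L + b • A) - (L + a • A) = (b - a) • A := by
        rw [sub_smul]; abel
      have h := det_ratio_le hLb' hLa'
        (by rw [e3]; exact posSemidef_smul hA.posSemidef (by linarith)) hKL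
      have e1 : (L + b • A) + (K - L) = K + b • A := by abel
      have e2 : (L + a • A) + (K - L) = K + a • A := by abel
      rw [e1, e2] at h
      exact h
    have hposb : 0 < (K + b • A).det * ((L + b • A).det)⁻¹ :=
      mul_pos hKb'.det_pos (inv_pos.mpr hLb'.det_pos)
    have hle : (K + b • A).det * ((L + b • A).det)⁻¹
        ≤ (K + a • A).det * ((L + a • A).det)⁻¹ := by
      rw [← div_eq_mul_inv, ← div_eq_mul_inv, div_le_div_iff₀ hLb'.det_pos hLa'.det_pos]
      linarith
    have := Real.log_le_log hposb hle
    linarith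
  · set m := hKL.sqrt with hmdefn
    set C := m * A⁻¹ * m with hCdefn
    have hg : Filter.Tendsto (fun α : ℝ => (1 / 2) * Real.log ((1 + α⁻¹ • C).det))
        Filter.atTop (nhds 0) := by
      have h1 : Continuous fun t : ℝ => (1 : Matrix (Fin d) (Fin d) ℝ) + t • C := by
        refine continuous_const.add ?_
        exact (continuous_id (X := ℝ)).smul continuous_const
      have h2 : Continuous fun t : ℝ => ((1 : Matrix (Fin d) (Fin d) ℝ) + t • C).det :=
        h1.matrix_det
      have hval : ((1 : Matrix (Fin d) (Fin d) ℝ) + (0:ℝ) • C).det = 1 := by simp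
      have h4 : ContinuousAt (fun t : ℝ => Real.log ((1 + t • C).det)) 0 := by
        have hlog : ContinuousAt Real.log (((1 : Matrix (Fin d) (Fin d) ℝ) + (0:ℝ) • C).det) := by
          rw [hval]; exact Real.continuousAt_log one_ne_zero
        exact ContinuousAt.comp (x := (0:ℝ)) (g := Real.log)
          (f := fun t : ℝ => ((1 : Matrix (Fin d) (Fin d) ℝ) + t • C).det) hlog h2.continuousAt
      have h5 : Filter.Tendsto (fun t : ℝ => (1 / 2) * Real.log ((1 + t • C).det))
          (nhds 0) (nhds 0) := by
        have := (h4.const_smul (1/2 : ℝ)).tendsto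
        simp only [Pi.smul_def, smul_eq_mul, hval, Real.log_one, mul_zero] at this
        exact this
      exact h5.comp tendsto_inv_atTop_zero
    refine tendsto_of_tendsto_of_tendsto_of_le_of_le' tendsto_const_nhds hg ?_ ?_
    · filter_upwards [Filter.eventually_gt_atTop (0:ℝ)] with α hα
      rw [hfval α hα]
      have h1 : 1 ≤ (K + α • A).det * ((L + α • A).det)⁻¹ := by
        rw [← div_eq_mul_inv, le_div_iff₀ (hLa α hα).det_pos, one_mul]
        refine det_le_det' (hLa α hα) ?_
        have e : (K + α • A) - (L + α • A) = K - L := by abel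
        rw [e]; exact hKL
      have := Real.log_nonneg h1
      linarith
    · filter_upwards [Filter.eventually_gt_atTop (0:ℝ)] with α hα
      rw [hfval α hα]
      have hLa' := hLa α hα
      have hAα : (α • A).PosDef := posDef_smul hA hα
      have hdets : (K + α • A).det = (L + α • A).det * (1 + m * (L + α • A)⁻¹ * m).det := by
        have h0 := det_add_posSemidef hLa' hKL
        rw [show (L + α • A) + (K - L) = K + α • A by abel] at h0
        exact h0
      have hratio : (K + α • A).det * ((L + α • A).det)⁻¹
          = (1 + m * (L + α • A)⁻¹ * m).det := by
        rw [hdets, mul_comm, ← mul_assoc, inv_mul_cancel₀ hLa'.det_pos.ne', one_mul]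
      rw [hratio]
      have hQ : (1 + m * (L + α • A)⁻¹ * m).PosDef := by
        refine Matrix.PosDef.one.add_posSemidef ?_
        have := hLa'.inv.posSemidef.mul_mul_conjTranspose_same m
        rwa [hKL.posSemidef_sqrt.1.eq] at this
      have hsm : (α • A)⁻¹ = α⁻¹ • A⁻¹ := by
        apply Matrix.inv_eq_right_inv
        rw [smul_mul_smul_comm, Matrix.mul_nonsing_inv _ (isUnit_iff_ne_zero.mpr hA.det_pos.ne'),
          mul_inv_cancel₀ hα.ne', one_smul]
      have hcongr : (1 + α⁻¹ • C) - (1 + m * (L + α • A)⁻¹ * m)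
          = m * ((α • A)⁻¹ - (L + α • A)⁻¹) * m := by
        rw [Matrix.mul_sub, Matrix.sub_mul, hsm]
        have : m * (α⁻¹ • A⁻¹) * m = α⁻¹ • C := by
          rw [hCdefn, mul_smul_comm, smul_mul_assoc]
        rw [this]
        abel
      have hpsd : ((1 + α⁻¹ • C) - (1 + m * (L + α • A)⁻¹ * m)).PosSemidef := by
        rw [hcongr]
        have hinv := inv_sub_inv_posSemidef hLa' hAα
          (by rw [show (L + α • A) - α • A = L by abel]; exact hL.posSemidef)
        have := hinv.mul_mul_conjTranspose_same m
        rwa [hKL.posSemidef_sqrt.1.eq] at this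
      have hle2 : (1 + m * (L + α • A)⁻¹ * m).det ≤ (1 + α⁻¹ • C).det :=
        det_le_det' hQ hpsd
      have := Real.log_le_log hQ.det_pos hle2
      linarith
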